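/- The function F(t) = (1/d) Σ_{j=0}^{d−1} |sin(dt/2) / sin((t − 2jπ/d)/2)| satisfies max_{t∈ℝ} F(t) = O(log d) as d → ∞; i.e., there is a constant M with max_t F(t) ≤ M log(d+1) for all d ≥ 1. -/

import Mathlib

open Real Finset

lemma aux_sin_nat_mul (n : ℕ) (x : ℝ) : |Real.sin (n * x)| ≤ n * |Real.sin x| := by
  induction n with
  | zero => simp
  | succ n ih =>
    have h : ((n:ℝ)+1)*x = n*x + x := by ring
    push_cast
    rw [h, Real.sin_add]
    calc |Real.sin (n*x) * Real.cos x + Real.cos (n*x) * Real.sin x|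
        ≤ |Real.sin (n*x) * Real.cos x| + |Real.cos (n*x) * Real.sin x| := abs_add_le _ _
      _ ≤ |Real.sin (n*x)| * 1 + 1 * |Real.sin x| := by
          rw [abs_mul, abs_mul]
          gcongr
          · exact Real.abs_cos_le_one _
          · exact Real.abs_cos_le_one _
      _ ≤ (n:ℝ) * |Real.sin x| + 1 * |Real.sin x| := by
          rw [mul_one]; gcongr
      _ = ((n:ℝ)+1) * |Real.sin x| := by ring

lemma aux_jordan {y : ℝ} (hy : |y| ≤ π/2) : 2/π * |y| ≤ |Real.sin y| := by
  rcases le_or_gt 0 y with h | h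
  · rw [abs_of_nonneg h] at hy ⊢
    rw [abs_of_nonneg (Real.sin_nonneg_of_nonneg_of_le_pi h (hy.trans (by linarith [Real.pi_pos])))]
    exact Real.mul_le_sin h hy
  · have h1 : 0 ≤ -y := by linarith
    rw [abs_of_neg h] at hy ⊢
    have h2 := Real.mul_le_sin h1 hy
    rw [Real.sin_neg] at h2
    calc 2/π * -y ≤ -Real.sin y := by linarith
      _ ≤ |Real.sin y| := by rw [abs_eq_max_neg]; exact le_max_right _ _

lemma aux_abs_sin_add_int (x : ℝ) (n : ℤ) : |Real.sin (x + n * π)| = |Real.sin x| := by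
  rw [Real.sin_add_int_mul_pi, abs_mul]
  rcases Int.even_or_odd n with h | h
  · rw [h.neg_one_zpow]; simp
  · rw [h.neg_one_zpow]; simp

lemma aux_harmonic (n : ℕ) : ∑ i ∈ Finset.range n, (1:ℝ)/(i+1) ≤ 1 + Real.log n := by
  induction n with
  | zero => simp
  | succ n ih =>
    rw [Finset.sum_range_succ]
    rcases Nat.eq_zero_or_pos n with rfl | hn
    · simp
    · have hn1 : (1:ℝ) ≤ n := by exact_mod_cast hn
      have hlog : Real.log (n:ℝ) + 1/((n:ℝ)+1) ≤ Real.log ((n:ℝ)+1) := by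
        have h := Real.log_le_sub_one_of_pos (show (0:ℝ) < (n:ℝ)/((n:ℝ)+1) by positivity)
        rw [Real.log_div (by positivity) (by positivity)] at h
        have h2 : (n:ℝ)/((n:ℝ)+1) - 1 = -(1/((n:ℝ)+1)) := by field_simp; ring
        linarith [h2 ▸ h]
      push_cast
      linarith [ih]

lemma aux_log_mono {a b : ℕ} (h : a ≤ b) : Real.log a ≤ Real.log b := by
  rcases Nat.eq_zero_or_pos a with rfl | ha
  · simp only [Nat.cast_zero, Real.log_zero]
    rcases Nat.eq_zero_or_pos b with rfl | hb
    · simp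
    · exact Real.log_nonneg (by exact_mod_cast hb)
  · exact Real.log_le_log (by exact_mod_cast ha) (by exact_mod_cast h)

noncomputable def auxD (d : ℕ) (v : ℝ) : ℝ := |v - d * round (v / d)|

noncomputable def auxc (d : ℕ) (a : ℝ) (i : ℕ) : ℝ := min (d:ℝ) ((d:ℝ)/(2 * auxD d (a + i)))

lemma auxD_nonneg (d : ℕ) (v : ℝ) : 0 ≤ auxD d v := abs_nonneg _

lemma auxc_nonneg (d : ℕ) (a : ℝ) (i : ℕ) : 0 ≤ auxc d a i := by
  refine le_min (by positivity) ?_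
  exact div_nonneg (by positivity) (mul_nonneg (by norm_num) (auxD_nonneg d _))

lemma auxD_shift (d : ℕ) (hd : 0 < d) (v : ℝ) (q : ℤ) : auxD d (v + d * q) = auxD d v := by
  have hd0 : (d:ℝ) ≠ 0 := by positivity
  unfold auxD
  have h : (v + d*q)/d = v/d + q := by field_simp
  rw [h, round_add_intCast]
  congr 1
  push_cast
  ring

lemma aux_key (d : ℕ) (hd : 1 ≤ d) (t : ℝ) (j : ℕ) (hj : j < d) :
    |Real.sin (d * t / 2) / Real.sin ((t - 2*j*π/d)/2)| ≤
      auxc d (Int.fract (d*t/(2*π))) (((⌊d*t/(2*π)⌋ - (j:ℤ)) % d).toNat) := by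
  have hd0 : (0:ℝ) < d := by exact_mod_cast hd
  have hπ := Real.pi_pos
  set u : ℝ := d*t/(2*π) with hu
  set m : ℤ := ⌊u⌋ with hm
  set i : ℕ := ((m - (j:ℤ)) % d).toNat with hi
  set s : ℝ := π * (u - j) / d with hs
  have hsarg : (t - 2*j*π/d)/2 = s := by rw [hs, hu]; field_simp
  have hdteq : (d:ℝ) * t / 2 = (d:ℝ) * s + (j:ℤ) * π := by
    rw [hs, hu]; push_cast; field_simp; ring
  have habs1 : |Real.sin (d*t/2)| = |Real.sin ((d:ℝ)*s)| := by
    rw [hdteq, aux_abs_sin_add_int]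
  have hdz : (d:ℤ) ≠ 0 := by exact_mod_cast hd0.ne'
  have h1 : (0:ℤ) ≤ (m - j) % d := Int.emod_nonneg _ hdz
  have h2 : (m - (j:ℤ)) = i + d * ((m - j) / d) := by
    have h := Int.mul_ediv_add_emod (m - j) d
    rw [hi, Int.toNat_of_nonneg h1]
    omega
  have hDeq : auxD d (u - j) = auxD d (Int.fract u + i) := by
    have h3 : u - j = (Int.fract u + i) + d * (((m - j)/d : ℤ) : ℝ) := by
      have hfr : u = Int.fract u + m := by rw [Int.fract]; ring
      have h2' : ((m:ℝ) - (j:ℝ)) = (i:ℝ) + (d:ℝ) * (((m-j)/d : ℤ) : ℝ) := by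
        exact_mod_cast h2
      push_cast at h2' ⊢; linarith [hfr, h2']
    rw [h3, auxD_shift d (by omega) _ _]
  rw [abs_div, hsarg]
  unfold auxc
  rw [← hDeq]
  rcases eq_or_ne (Real.sin s) 0 with hzero | hne
  · rw [hzero, abs_zero, div_zero]
    refine le_min (by positivity) ?_
    exact div_nonneg (by positivity) (mul_nonneg (by norm_num) (auxD_nonneg d _))
  · have hspos : 0 < |Real.sin s| := abs_pos.2 hne
    refine le_min ?_ ?_
    · rw [div_le_iff₀ hspos, habs1]
      exact aux_sin_nat_mul d s
    · set k : ℤ := round ((u - (j:ℝ))/d) with hk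
      have hsk : s - π * k = π * ((u - (j:ℝ))/d - k) := by rw [hs]; field_simp
      have habs2 : |Real.sin s| = |Real.sin (s - π*k)| := by
        rw [← aux_abs_sin_add_int (s - π*k) k]; congr 1; ring
      have hhalf : |(u - (j:ℝ))/d - (k:ℝ)| ≤ 1/2 := abs_sub_round _
      have hsmall : |s - π*k| ≤ π/2 := by
        rw [hsk, abs_mul, abs_of_pos hπ]; nlinarith
      have hJ : 2/π * |s - π*k| ≤ |Real.sin s| := by rw [habs2]; exact aux_jordan hsmall
      have hDval : auxD d (u - (j:ℝ)) = (d:ℝ) * |(u - (j:ℝ))/d - k| := by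
        unfold auxD
        rw [← hk, ← abs_of_pos hd0, ← abs_mul]
        congr 1; field_simp; rw [abs_of_pos hd0]; ring
      have hDpos : 0 < auxD d (u - (j:ℝ)) := by
        rcases (auxD_nonneg d (u - (j:ℝ))).lt_or_eq with h | h
        · exact h
        · exfalso; apply hne
          have hz : |(u - (j:ℝ))/d - (k:ℝ)| = 0 := by
            rw [hDval] at h
            rcases mul_eq_zero.mp h.symm with h' | h'
            · exact absurd h' hd0.ne'
            · exact h'
          have hz2 : s = π * k := by
            have := abs_eq_zero.mp hz
            rw [hs]
            have : u - (j:ℝ) = d * k := by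
              field_simp at this; linarith [this]
            rw [this]; field_simp
          rw [hz2, mul_comm]; exact Real.sin_int_mul_pi k
      have habsk : |s - π*k| = π * |(u - (j:ℝ))/d - (k:ℝ)| := by
        rw [hsk, abs_mul, abs_of_pos hπ]
      have hsin_lb : 2 * auxD d (u - (j:ℝ)) / d ≤ |Real.sin s| := by
        rw [hDval]
        have : 2 * ((d:ℝ) * |(u - (j:ℝ))/d - (k:ℝ)|) / d = 2/π * (π * |(u - (j:ℝ))/d - (k:ℝ)|) := by
          field_simp
        rw [this, ← habsk]; exact hJ
      have hDpos2 : 0 < 2 * auxD d (u - (j:ℝ)) := by linarith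
      rw [div_le_div_iff₀ hspos hDpos2]
      have hb1 : |Real.sin ((d:ℝ) * t / 2)| ≤ 1 := Real.abs_sin_le_one _
      have f1 : |Real.sin ((d:ℝ) * t / 2)| * (2 * auxD d (u - (j:ℝ))) ≤ 2 * auxD d (u - (j:ℝ)) :=
        mul_le_of_le_one_left hDpos2.le hb1
      have f2 : 2 * auxD d (u - (j:ℝ)) ≤ |Real.sin s| * d := (div_le_iff₀ hd0).mp hsin_lb
      linarith

lemma aux_sigma_mem (d : ℕ) (hd : 1 ≤ d) (m : ℤ) (j : ℕ) :
    ((m - (j:ℤ)) % d).toNat < d := by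
  have hdz : (d:ℤ) ≠ 0 := by exact_mod_cast (by omega : d ≠ 0)
  have h1 := Int.emod_nonneg (m - (j:ℤ)) hdz
  have h2 := Int.emod_lt_of_pos (m - (j:ℤ)) (by exact_mod_cast (by omega : 0 < d) : (0:ℤ) < d)
  omega

lemma aux_sigma_inv (d : ℕ) (hd : 1 ≤ d) (m : ℤ) (j : ℕ) (hj : j < d) :
    ((m - ((((m - (j:ℤ)) % d).toNat : ℤ))) % d).toNat = j := by
  have hdz : (d:ℤ) ≠ 0 := by exact_mod_cast (by omega : d ≠ 0)
  have h1 := Int.emod_nonneg (m - (j:ℤ)) hdz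
  rw [Int.toNat_of_nonneg h1]
  have e1 : (m - (m - (j:ℤ)) % d) % d = (m - (m - (j:ℤ))) % d := by
    conv_lhs => rw [Int.sub_emod]
    conv_rhs => rw [Int.sub_emod]
    rw [Int.emod_emod_of_dvd _ dvd_rfl]
  rw [e1, show m - (m - (j:ℤ)) = (j:ℤ) by ring,
    Int.emod_eq_of_lt (by positivity) (by exact_mod_cast hj)]
  simp

lemma aux_bij (d : ℕ) (hd : 1 ≤ d) (m : ℤ) (f : ℕ → ℝ) :
    ∑ j ∈ Finset.range d, f (((m - (j:ℤ)) % d).toNat) = ∑ i ∈ Finset.range d, f i := by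
  refine Finset.sum_nbij' (fun j => ((m - (j:ℤ)) % d).toNat)
    (fun i => ((m - (i:ℤ)) % d).toNat) ?_ ?_ ?_ ?_ ?_
  · intro a ha; exact Finset.mem_range.mpr (aux_sigma_mem d hd m a)
  · intro a ha; exact Finset.mem_range.mpr (aux_sigma_mem d hd m a)
  · intro a ha; exact aux_sigma_inv d hd m a (Finset.mem_range.mp ha)
  · intro a ha; exact aux_sigma_inv d hd m a (Finset.mem_range.mp ha)
  · intro a ha; rfl

lemma aux_c_mid (d : ℕ) (a : ℝ) (ha0 : 0 ≤ a) (ha1 : a < 1) (i : ℕ)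
    (h1 : 1 ≤ i) (h2 : i + 2 ≤ d) :
    auxc d a i ≤ (d:ℝ)/(2*i) + (d:ℝ)/(2*((d-1-i:ℕ):ℝ)) := by
  have hd0 : (0:ℝ) < d := by exact_mod_cast (by omega : 0 < d)
  have hi1 : (1:ℝ) ≤ (i:ℝ) := by exact_mod_cast h1
  have hcast : ((d-1-i:ℕ):ℝ) = (d:ℝ) - 1 - (i:ℝ) := by
    rw [Nat.cast_sub (by omega), Nat.cast_sub (by omega)]
    push_cast; ring
  have hi2 : (1:ℝ) ≤ ((d-1-i:ℕ):ℝ) := by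
    have : 1 ≤ d - 1 - i := by omega
    exact_mod_cast this
  have hDlb : min (i:ℝ) ((d-1-i:ℕ):ℝ) ≤ auxD d (a + i) := by
    unfold auxD
    set k : ℤ := round ((a + (i:ℝ))/d) with hk
    rcases le_or_gt k 0 with hkk | hkk
    · have hk0 : (k:ℝ) ≤ 0 := by exact_mod_cast hkk
      have hdk : (d:ℝ) * k ≤ 0 := mul_nonpos_of_nonneg_of_nonpos hd0.le hk0
      calc min (i:ℝ) ((d-1-i:ℕ):ℝ) ≤ (i:ℝ) := min_le_left _ _
        _ ≤ a + i - d*k := by linarith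
        _ ≤ |a + i - d*k| := le_abs_self _
    · have hk1 : (1:ℝ) ≤ (k:ℝ) := by exact_mod_cast hkk
      have hdk : (d:ℝ) ≤ (d:ℝ) * k := le_mul_of_one_le_right hd0.le hk1
      calc min (i:ℝ) ((d-1-i:ℕ):ℝ) ≤ ((d-1-i:ℕ):ℝ) := min_le_right _ _
        _ ≤ (d:ℝ)*k - (a + i) := by rw [hcast]; linarith
        _ ≤ |a + i - d*k| := by rw [abs_sub_comm]; exact le_abs_self _
  have hminpos : (0:ℝ) < min (i:ℝ) ((d-1-i:ℕ):ℝ) := lt_min (by linarith) (by linarith)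
  have hDpos : 0 < auxD d (a + i) := lt_of_lt_of_le hminpos hDlb
  have hstep : auxc d a i ≤ (d:ℝ)/(2 * min (i:ℝ) ((d-1-i:ℕ):ℝ)) := by
    refine (min_le_right _ _).trans ?_
    apply div_le_div_of_nonneg_left hd0.le (by linarith)
    linarith
  rcases min_cases (i:ℝ) ((d-1-i:ℕ):ℝ) with ⟨he, _⟩ | ⟨he, _⟩
  · rw [he] at hstep
    have : (0:ℝ) ≤ (d:ℝ)/(2*((d-1-i:ℕ):ℝ)) := by positivity
    linarith
  · rw [he] at hstep
    have : (0:ℝ) ≤ (d:ℝ)/(2*(i:ℝ)) := by positivity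
    linarith

lemma aux_csum (d : ℕ) (hd : 1 ≤ d) (a : ℝ) (ha0 : 0 ≤ a) (ha1 : a < 1) :
    ∑ i ∈ Finset.range d, auxc d a i ≤ d * (3 + Real.log (d+1)) := by
  have hd0 : (0:ℝ) < d := by exact_mod_cast (by omega : 0 < d)
  have hlog1 : (0:ℝ) ≤ Real.log ((d:ℝ)+1) := Real.log_nonneg (by linarith)
  rcases eq_or_lt_of_le hd with hd1 | hd2
  · subst hd1
    rw [Finset.sum_range_one]
    have h' : auxc 1 a 0 ≤ ((1:ℕ):ℝ) := min_le_left _ _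
    push_cast at h' hlog1 ⊢
    linarith
  · rw [Finset.range_eq_Ico,
      ← Finset.sum_Ico_consecutive _ (show 0 ≤ d-1 by omega) (show d-1 ≤ d by omega),
      ← Finset.sum_Ico_consecutive _ (show (0:ℕ) ≤ 1 by omega) (show 1 ≤ d-1 by omega)]
    have hA : ∑ i ∈ Finset.Ico 0 1, auxc d a i ≤ (d:ℝ) := by
      rw [Finset.sum_Ico_eq_sum_range]
      norm_num
      exact min_le_left _ _
    have hC : ∑ i ∈ Finset.Ico (d-1) d, auxc d a i ≤ (d:ℝ) := by
      rw [Finset.sum_Ico_eq_sum_range, show d - (d-1) = 1 by omega, Finset.sum_range_one]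
      exact min_le_left _ _
    have hharm2 : ∑ i ∈ Finset.range (d-2), (1:ℝ)/((i:ℝ)+1) ≤ 1 + Real.log ((d:ℝ)+1) := by
      refine (aux_harmonic (d-2)).trans ?_
      have := aux_log_mono (show d-2 ≤ d+1 by omega)
      push_cast at this
      linarith
    have hS1 : ∑ i ∈ Finset.range (d-2), (d:ℝ)/(2*((1+i:ℕ):ℝ)) ≤ (d:ℝ)/2 * (1 + Real.log ((d:ℝ)+1)) := by
      calc ∑ i ∈ Finset.range (d-2), (d:ℝ)/(2*((1+i:ℕ):ℝ))
          = ∑ i ∈ Finset.range (d-2), (d:ℝ)/2 * (1/((i:ℝ)+1)) := by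
            refine Finset.sum_congr rfl fun i _ => ?_
            push_cast
            rw [div_mul_div_comm]
            congr 1
            · ring
            · ring
        _ = (d:ℝ)/2 * ∑ i ∈ Finset.range (d-2), (1:ℝ)/((i:ℝ)+1) := by rw [← Finset.mul_sum]
        _ ≤ (d:ℝ)/2 * (1 + Real.log ((d:ℝ)+1)) := by
            apply mul_le_mul_of_nonneg_left hharm2 (by positivity)
    have hB : ∑ i ∈ Finset.Ico 1 (d-1), auxc d a i ≤ (d:ℝ) * (1 + Real.log ((d:ℝ)+1)) := by
      calc ∑ i ∈ Finset.Ico 1 (d-1), auxc d a i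
          ≤ ∑ i ∈ Finset.Ico 1 (d-1), ((d:ℝ)/(2*(i:ℝ)) + (d:ℝ)/(2*((d-1-i:ℕ):ℝ))) := by
            refine Finset.sum_le_sum fun i hi => ?_
            obtain ⟨hi1, hi2⟩ := Finset.mem_Ico.mp hi
            exact aux_c_mid d a ha0 ha1 i hi1 (by omega)
        _ = ∑ i ∈ Finset.Ico 1 (d-1), (d:ℝ)/(2*(i:ℝ))
            + ∑ i ∈ Finset.Ico 1 (d-1), (d:ℝ)/(2*((d-1-i:ℕ):ℝ)) := Finset.sum_add_distrib
        _ ≤ (d:ℝ)/2 * (1 + Real.log ((d:ℝ)+1)) + (d:ℝ)/2 * (1 + Real.log ((d:ℝ)+1)) := by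
            have e1 : ∑ i ∈ Finset.Ico 1 (d-1), (d:ℝ)/(2*(i:ℝ))
                = ∑ i ∈ Finset.range (d-2), (d:ℝ)/(2*((1+i:ℕ):ℝ)) := by
              rw [Finset.sum_Ico_eq_sum_range, show d-1-1 = d-2 by omega]
            have e2 : ∑ i ∈ Finset.Ico 1 (d-1), (d:ℝ)/(2*((d-1-i:ℕ):ℝ))
                = ∑ i ∈ Finset.range (d-2), (d:ℝ)/(2*((1+i:ℕ):ℝ)) := by
              rw [Finset.sum_Ico_eq_sum_range, show d-1-1 = d-2 by omega]
              rw [← Finset.sum_range_reflect (fun i => (d:ℝ)/(2*((1+i:ℕ):ℝ))) (d-2)]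
              refine Finset.sum_congr rfl fun j hj => ?_
              have hjlt := Finset.mem_range.mp hj
              rw [show d - 1 - (1 + j) = d-2-j by omega, show 1 + (d-2-1-j) = d-2-j by omega]
            rw [e1, e2]
            linarith [hS1]
        _ = (d:ℝ) * (1 + Real.log ((d:ℝ)+1)) := by ring
    push_cast
    linarith [hA, hB, hC]

theorem roots_of_unity_lebesgue_log_bound :
    ∃ M : ℝ, ∀ d : ℕ, 1 ≤ d → ∀ t : ℝ,
      (1 / d) * ∑ j ∈ Finset.range d,
        |Real.sin (d * t / 2) / Real.sin ((t - 2 * j * π / d) / 2)| ≤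
      M * Real.log (d + 1) := by
  use 6
  intro d hd t
  have hd0 : (0:ℝ) < d := by exact_mod_cast hd
  have ha0 : 0 ≤ Int.fract ((d:ℝ)*t/(2*π)) := Int.fract_nonneg _
  have ha1 : Int.fract ((d:ℝ)*t/(2*π)) < 1 := Int.fract_lt_one _
  have h1 : ∑ j ∈ Finset.range d, |Real.sin (d * t / 2) / Real.sin ((t - 2 * j * π / d) / 2)|
      ≤ ∑ j ∈ Finset.range d,
        auxc d (Int.fract ((d:ℝ)*t/(2*π))) (((⌊(d:ℝ)*t/(2*π)⌋ - (j:ℤ)) % d).toNat) :=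
    Finset.sum_le_sum (fun j hj => aux_key d hd t j (Finset.mem_range.mp hj))
  rw [aux_bij d hd ⌊(d:ℝ)*t/(2*π)⌋ _] at h1
  have h2 := aux_csum d hd _ ha0 ha1
  have hlog : (0.6:ℝ) ≤ Real.log ((d:ℝ)+1) := by
    have h3 : Real.log 2 ≤ Real.log ((d:ℝ)+1) := by
      apply Real.log_le_log (by norm_num)
      have : (1:ℝ) ≤ (d:ℝ) := by exact_mod_cast hd
      linarith
    linarith [Real.log_two_gt_d9]
  calc (1/(d:ℝ)) * ∑ j ∈ Finset.range d,
        |Real.sin (d * t / 2) / Real.sin ((t - 2 * j * π / d) / 2)|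
      ≤ (1/(d:ℝ)) * ((d:ℝ) * (3 + Real.log ((d:ℝ)+1))) := by
        apply mul_le_mul_of_nonneg_left (le_trans h1 h2) (by positivity)
    _ = 3 + Real.log ((d:ℝ)+1) := by field_simp
    _ ≤ 6 * Real.log ((d:ℝ)+1) := by linarith
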